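/- Let m ≥ 1 and let M ∈ ℝ^{m×m} be a matrix all of whose complex eigenvalues have negative real part. Then there exists a unique symmetric positive definite matrix Q ∈ ℝ^{m×m} such that Mᵀ Q + Q M = −I_m. -/

import Mathlib

open Matrix Polynomial

/-- A real square matrix is Hurwitz if every complex root of its characteristic
polynomial has negative real part. -/
def IsHurwitz {ι : Type*} [Fintype ι] [DecidableEq ι] (M : Matrix ι ι ℝ) : Prop :=
  ∀ z : ℂ, aeval z M.charpoly = 0 → z.re < 0

variable {m : ℕ}

lemma eval_charpoly' {R : Type*} [CommRing R] (A : Matrix (Fin m) (Fin m) R) (z : R) :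
    A.charpoly.eval z = (z • (1 : Matrix (Fin m) (Fin m) R) - A).det := by
  rw [Matrix.charpoly, ← Polynomial.coe_evalRingHom, RingHom.map_det]
  congr 1
  ext i j
  by_cases h : i = j
  · subst h
    simp [charmatrix_apply_eq, Matrix.one_apply, Matrix.smul_apply]
  · simp [charmatrix_apply_ne _ _ _ h, Matrix.one_apply_ne h, Matrix.smul_apply]

noncomputable abbrev cmap (A : Matrix (Fin m) (Fin m) ℝ) : Matrix (Fin m) (Fin m) ℂ :=
  A.map (algebraMap ℝ ℂ)

lemma aeval_charpoly_eq (A : Matrix (Fin m) (Fin m) ℝ) (z : ℂ) :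
    aeval z A.charpoly = (z • (1 : Matrix (Fin m) (Fin m) ℂ) - cmap A).det := by
  rw [aeval_def, eval₂_eq_eval_map, ← Matrix.charpoly_map, eval_charpoly']

lemma isHurwitz_iff (A : Matrix (Fin m) (Fin m) ℝ) :
    IsHurwitz A ↔ ∀ z : ℂ, (z • (1 : Matrix (Fin m) (Fin m) ℂ) - cmap A).det = 0 → z.re < 0 := by
  unfold IsHurwitz
  simp_rw [aeval_charpoly_eq]

lemma det_aeval_neg_ne_zero {A : Matrix (Fin m) (Fin m) ℝ} (hA : IsHurwitz A) :
    IsUnit (aeval (-A) A.charpoly) := by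
  rw [Matrix.isUnit_iff_isUnit_det, isUnit_iff_ne_zero]
  intro h0
  have hmapdet : (algebraMap ℝ ℂ) (aeval (-A) A.charpoly).det = 0 := by rw [h0, map_zero]
  rw [RingHom.map_det] at hmapdet
  have hmap : (RingHom.mapMatrix (algebraMap ℝ ℂ)) (aeval (-A) A.charpoly)
      = aeval (-(cmap A)) (A.charpoly.map (algebraMap ℝ ℂ)) := by
    have h1 := aeval_algHom_apply (AlgHom.mapMatrix (Algebra.ofId ℝ ℂ)) (-A) A.charpoly
    have h2 : (AlgHom.mapMatrix (Algebra.ofId ℝ ℂ)) (-A) = -(cmap A) := by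
      simp only [map_neg, neg_inj, AlgHom.mapMatrix_apply]
      rfl
    rw [aeval_map_algebraMap, ← h2, h1]
    rfl
  rw [hmap] at hmapdet
  set p : Polynomial ℂ := A.charpoly.map (algebraMap ℝ ℂ) with hp
  have hmonic : p.Monic := (A.charpoly_monic).map _
  have hsplit : p = (p.roots.map fun r => X - C r).prod :=
    (IsAlgClosed.splits p).eq_prod_roots_of_monic hmonic
  have hlist : p = ((p.roots.toList).map fun r => X - C r).prod := by
    conv_lhs => rw [hsplit]
    conv_lhs => rw [← Multiset.coe_toList p.roots]
    rw [Multiset.map_coe, Multiset.prod_coe]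
  have haeval : aeval (-(cmap A)) p
      = ((p.roots.toList).map fun r =>
          -(cmap A) - r • (1 : Matrix (Fin m) (Fin m) ℂ)).prod := by
    conv_lhs => rw [hlist]
    rw [map_list_prod (aeval (-(cmap A)) : Polynomial ℂ →ₐ[ℂ] _), List.map_map]
    congr 1
    ext r
    simp [Algebra.algebraMap_eq_smul_one]
  have hdet := map_list_prod (Matrix.detMonoidHom (n := Fin m) (R := ℂ))
    ((p.roots.toList).map fun r => -(cmap A) - r • (1 : Matrix (Fin m) (Fin m) ℂ))
  simp only [Matrix.coe_detMonoidHom] at hdet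
  rw [haeval, hdet, List.map_map] at hmapdet
  refine List.prod_ne_zero ?_ hmapdet
  intro h0'
  obtain ⟨r, hr, hr0⟩ := List.mem_map.mp h0'
  have hrroot : r ∈ p.roots := (Multiset.mem_toList).mp hr
  have hre : r.re < 0 := by
    apply hA r
    rw [aeval_def, eval₂_eq_eval_map]
    exact isRoot_of_mem_roots hrroot
  have heq : -(cmap A) - r • (1 : Matrix (Fin m) (Fin m) ℂ)
      = (-r) • (1 : Matrix (Fin m) (Fin m) ℂ) - cmap A := by
    rw [neg_smul]; abel
  simp only [Function.comp_apply, heq] at hr0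
  have := (isHurwitz_iff A).mp hA (-r) hr0
  simp only [Complex.neg_re] at this
  linarith

/-- The Lyapunov operator `Q ↦ Aᵀ Q + Q A`. -/
noncomputable def lyapL (A : Matrix (Fin m) (Fin m) ℝ) :
    Module.End ℝ (Matrix (Fin m) (Fin m) ℝ) :=
  LinearMap.mulLeft ℝ Aᵀ + LinearMap.mulRight ℝ A

lemma lyapL_apply (A Q : Matrix (Fin m) (Fin m) ℝ) : lyapL A Q = Aᵀ * Q + Q * A := rfl

lemma charpoly_transpose' (A : Matrix (Fin m) (Fin m) ℝ) : Aᵀ.charpoly = A.charpoly := by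
  rw [Matrix.charpoly, Matrix.charpoly, ← Matrix.det_transpose (charmatrix A)]
  congr 1
  ext i j
  by_cases h : i = j
  · subst h; simp [charmatrix_apply_eq]
  · rw [Matrix.transpose_apply, charmatrix_apply_ne _ _ _ h,
      charmatrix_apply_ne _ _ _ (Ne.symm h), Matrix.transpose_apply]

lemma lyapL_injective {A : Matrix (Fin m) (Fin m) ℝ} (hA : IsHurwitz A) :
    Function.Injective (lyapL A) := by
  rw [← LinearMap.ker_eq_bot, LinearMap.ker_eq_bot']
  intro Q hQ
  rw [lyapL_apply] at hQ
  have key : ∀ k : ℕ, Aᵀ ^ k * Q = Q * (-A) ^ k := by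
    intro k
    induction k with
    | zero => simp
    | succ k ih =>
      have h1 : Aᵀ * Q = Q * (-A) := by
        rw [mul_neg]
        linear_combination (norm := noncomm_ring) hQ
      calc Aᵀ ^ (k+1) * Q = Aᵀ ^ k * (Aᵀ * Q) := by rw [pow_succ, mul_assoc]
        _ = Aᵀ ^ k * Q * (-A) := by rw [h1, mul_assoc]
        _ = Q * (-A) ^ k * (-A) := by rw [ih]
        _ = Q * (-A) ^ (k+1) := by rw [pow_succ, mul_assoc]
  have keyp : ∀ p : Polynomial ℝ, aeval Aᵀ p * Q = Q * aeval (-A) p := by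
    intro p
    induction p using Polynomial.induction_on' with
    | add f g hf hg => rw [map_add, map_add, add_mul, mul_add, hf, hg]
    | monomial n a =>
      rw [aeval_monomial, aeval_monomial, mul_assoc, key n, ← mul_assoc,
        Algebra.commutes, mul_assoc]
  have h0 : Q * aeval (-A) A.charpoly = 0 := by
    rw [← keyp, ← charpoly_transpose' A, Matrix.aeval_self_charpoly, zero_mul]
  obtain ⟨u, hu⟩ := det_aeval_neg_ne_zero hA
  have hQ0 : Q = Q * (↑u : Matrix (Fin m) (Fin m) ℝ) * (↑u⁻¹ : Matrix (Fin m) (Fin m) ℝ) := by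
    rw [mul_assoc, Units.mul_inv, mul_one]
  rw [hu, h0, zero_mul] at hQ0
  exact hQ0

lemma lyapL_bijective {A : Matrix (Fin m) (Fin m) ℝ} (hA : IsHurwitz A) :
    Function.Bijective (lyapL A) :=
  ⟨lyapL_injective hA, (LinearMap.injective_iff_surjective).mp (lyapL_injective hA)⟩

noncomputable def matB : Module.Basis (Fin m × Fin m) ℝ (Matrix (Fin m) (Fin m) ℝ) :=
  Matrix.stdBasis ℝ (Fin m) (Fin m)

noncomputable def Nmat (A : Matrix (Fin m) (Fin m) ℝ) :
    Matrix (Fin m × Fin m) (Fin m × Fin m) ℝ :=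
  LinearMap.toMatrix matB matB (lyapL A)

lemma Nmat_det_ne_zero {A : Matrix (Fin m) (Fin m) ℝ} (hA : IsHurwitz A) :
    (Nmat A).det ≠ 0 := by
  have h1 : IsUnit (lyapL A) := (Module.End.isUnit_iff _).mpr (lyapL_bijective hA)
  have h2 : IsUnit (Nmat A) := by
    have := h1.map (LinearMap.toMatrixAlgEquiv (matB (m := m)))
    rwa [show (LinearMap.toMatrixAlgEquiv matB) (lyapL A) = Nmat A from rfl] at this
  rw [← isUnit_iff_ne_zero, ← Matrix.isUnit_iff_isUnit_det]
  exact h2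

/-- The candidate solution of the Lyapunov equation `lyapL A Q = -1`. -/
noncomputable def solQ (A : Matrix (Fin m) (Fin m) ℝ) : Matrix (Fin m) (Fin m) ℝ :=
  matB.equivFun.symm ((Nmat A)⁻¹ *ᵥ matB.equivFun (-1))

lemma lyapL_solQ {A : Matrix (Fin m) (Fin m) ℝ} (hA : IsHurwitz A) :
    lyapL A (solQ A) = -1 := by
  apply matB.equivFun.injective
  have h1 : ∀ X : Matrix (Fin m) (Fin m) ℝ,
      matB.equivFun (lyapL A X) = Nmat A *ᵥ matB.equivFun X := by
    intro X
    simp only [Module.Basis.equivFun_apply]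
    exact (LinearMap.toMatrix_mulVec_repr matB matB (lyapL A) X).symm
  rw [h1, solQ, LinearEquiv.apply_symm_apply, Matrix.mulVec_mulVec,
    Matrix.mul_nonsing_inv _ (isUnit_iff_ne_zero.mpr (Nmat_det_ne_zero hA)), Matrix.one_mulVec]

lemma lyapL_unique {A : Matrix (Fin m) (Fin m) ℝ} (hA : IsHurwitz A)
    {X Y : Matrix (Fin m) (Fin m) ℝ} (hX : lyapL A X = -1) (hY : lyapL A Y = -1) : X = Y :=
  lyapL_injective hA (hX.trans hY.symm)

lemma solQ_isSymm {A : Matrix (Fin m) (Fin m) ℝ} (hA : IsHurwitz A) : (solQ A).IsSymm := by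
  have hT : lyapL A (solQ A)ᵀ = -1 := by
    have := congrArg Matrix.transpose (lyapL_solQ hA)
    rw [lyapL_apply, Matrix.transpose_add, Matrix.transpose_mul, Matrix.transpose_mul,
      Matrix.transpose_transpose, Matrix.transpose_neg, Matrix.transpose_one] at this
    rw [lyapL_apply]
    linear_combination (norm := noncomm_ring) this
  exact lyapL_unique hA hT (lyapL_solQ hA)

lemma solQ_mulVec_ne_zero {A : Matrix (Fin m) (Fin m) ℝ} (hA : IsHurwitz A)
    {x : Fin m → ℝ} (hx : x ≠ 0) : solQ A *ᵥ x ≠ 0 := by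
  intro h0
  have hsym := (solQ_isSymm hA).eq
  have heq := congrArg (fun B => x ⬝ᵥ B *ᵥ x) (lyapL_solQ hA)
  simp only [lyapL_apply] at heq
  have t1 : (Aᵀ * solQ A) *ᵥ x = 0 := by
    rw [← Matrix.mulVec_mulVec, h0, Matrix.mulVec_zero]
  have t2 : x ⬝ᵥ (solQ A * A) *ᵥ x = 0 := by
    rw [← Matrix.mulVec_mulVec, Matrix.dotProduct_mulVec, ← hsym, Matrix.vecMul_transpose, h0]
    exact zero_dotProduct _
  rw [Matrix.add_mulVec, dotProduct_add, t1, dotProduct_zero, t2,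
    Matrix.neg_mulVec, Matrix.one_mulVec, dotProduct_neg] at heq
  have : x ⬝ᵥ x = 0 := by linarith
  exact hx (dotProduct_self_eq_zero.mp this)

lemma isSymm_isHermitian {Q : Matrix (Fin m) (Fin m) ℝ} (hQ : Q.IsSymm) : Q.IsHermitian := by
  rw [Matrix.IsHermitian, Matrix.conjTranspose]
  ext i j
  have := congrFun (congrFun hQ.eq i) j
  simpa using this

/-- A symmetric real matrix which is positive semidefinite (as a quadratic form)
and has trivial kernel is positive definite. -/
lemma posDef_of_psd_of_ker {Q : Matrix (Fin m) (Fin m) ℝ} (hQ : Q.IsSymm)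
    (hpsd : ∀ x : Fin m → ℝ, 0 ≤ x ⬝ᵥ Q *ᵥ x)
    (hker : ∀ x : Fin m → ℝ, x ≠ 0 → Q *ᵥ x ≠ 0) : Q.PosDef := by
  have hvm : ∀ a : Fin m → ℝ, a ᵥ* Q = Q *ᵥ a := by
    intro a
    conv_lhs => rw [← hQ.eq]
    exact Matrix.vecMul_transpose Q a
  have hsymdot : ∀ a b : Fin m → ℝ, a ⬝ᵥ Q *ᵥ b = b ⬝ᵥ Q *ᵥ a := by
    intro a b
    rw [Matrix.dotProduct_mulVec, hvm, dotProduct_comm]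
  refine Matrix.PosDef.of_dotProduct_mulVec_pos (isSymm_isHermitian hQ) fun x hx => ?_
  simp only [star_trivial]
  rcases lt_or_eq_of_le (hpsd x) with h | h
  · exact h
  exfalso
  set y : Fin m → ℝ := Q *ᵥ x with hy
  have hBxy : x ⬝ᵥ Q *ᵥ y = y ⬝ᵥ y := by
    rw [Matrix.dotProduct_mulVec, hvm, ← hy]
  have hsq : ∀ t : ℝ, 0 ≤ 2 * t * (y ⬝ᵥ y) + t ^ 2 * (y ⬝ᵥ Q *ᵥ y) := by
    intro t
    have h1 := hpsd (x + t • y)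
    have expand : (x + t • y) ⬝ᵥ Q *ᵥ (x + t • y)
        = x ⬝ᵥ Q *ᵥ x + t * (x ⬝ᵥ Q *ᵥ y) + t * (y ⬝ᵥ Q *ᵥ x) + t ^ 2 * (y ⬝ᵥ Q *ᵥ y) := by
      rw [Matrix.mulVec_add, Matrix.mulVec_smul, dotProduct_add, add_dotProduct,
        add_dotProduct, dotProduct_smul, smul_dotProduct,
        smul_dotProduct, dotProduct_smul]
      simp only [smul_eq_mul]
      ring
    rw [expand, ← h, hsymdot y x, hBxy] at h1
    linarith
  have hyy : y ⬝ᵥ y = 0 := by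
    by_contra hne
    have hynn : 0 ≤ y ⬝ᵥ y := Finset.sum_nonneg fun i _ => mul_self_nonneg (y i)
    have hypos : 0 < y ⬝ᵥ y := lt_of_le_of_ne hynn (Ne.symm hne)
    have hd : 0 ≤ y ⬝ᵥ Q *ᵥ y := hpsd y
    set c := y ⬝ᵥ y with hc
    set d := y ⬝ᵥ Q *ᵥ y with hdd
    have hd1 : (0:ℝ) < d + 1 := by linarith
    have ht := hsq (-(c / (d + 1)))
    have ht2 : 0 ≤ (2 * (-(c / (d + 1))) * c + (-(c / (d + 1))) ^ 2 * d) * (d + 1) ^ 2 :=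
      mul_nonneg ht (sq_nonneg _)
    have hexp : (2 * (-(c / (d + 1))) * c + (-(c / (d + 1))) ^ 2 * d) * (d + 1) ^ 2
        = -2 * c ^ 2 * (d + 1) + c ^ 2 * d := by
      field_simp
    rw [hexp] at ht2
    nlinarith [mul_pos hypos hypos, hd]
  exact hker x hx (dotProduct_self_eq_zero.mp hyy)

lemma cmap_smul_add (a b : ℝ) (A B : Matrix (Fin m) (Fin m) ℝ) :
    cmap (a • A + b • B) = (a : ℂ) • cmap A + (b : ℂ) • cmap B := by
  ext i j
  simp only [cmap, Matrix.map_apply, Matrix.add_apply, Matrix.smul_apply, smul_eq_mul,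
    Complex.coe_algebraMap]
  push_cast
  ring

lemma cmap_neg_one : cmap (-1 : Matrix (Fin m) (Fin m) ℝ) = -1 := by
  have h : cmap (-1 : Matrix (Fin m) (Fin m) ℝ)
      = (RingHom.mapMatrix (algebraMap ℝ ℂ)) (-1) := rfl
  rw [h, map_neg]
  congr 1
  ext i j
  by_cases hij : i = j <;>
    simp [RingHom.mapMatrix_apply, Matrix.map_apply, Matrix.one_apply, hij]

lemma isHurwitz_path (hm : 1 ≤ m) {M : Matrix (Fin m) (Fin m) ℝ} (hM : IsHurwitz M)
    {t : ℝ} (ht : t ∈ Set.Icc (0:ℝ) 1) :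
    IsHurwitz ((1 - t) • M + t • (-1 : Matrix (Fin m) (Fin m) ℝ)) := by
  obtain ⟨ht0, ht1⟩ := ht
  rw [isHurwitz_iff]
  intro z hz
  rw [cmap_smul_add, cmap_neg_one] at hz
  rcases eq_or_lt_of_le ht1 with h1 | h1
  · -- t = 1
    subst h1
    norm_num at hz
    have heq : z • (1 : Matrix (Fin m) (Fin m) ℂ) + 1
        = (z + 1) • (1 : Matrix (Fin m) (Fin m) ℂ) := by
      rw [add_smul, one_smul]
    rw [heq, Matrix.det_smul, Matrix.det_one, mul_one] at hz
    have hm0 : Fintype.card (Fin m) ≠ 0 := by simp; omega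
    have hz1 : z + 1 = 0 := pow_eq_zero_iff hm0 |>.mp hz
    have hz2 : z = -1 := eq_neg_of_add_eq_zero_left hz1
    rw [hz2]
    norm_num
  · -- t < 1
    have hs : (0:ℝ) < 1 - t := by linarith
    have hsne : ((1 - t : ℝ) : ℂ) ≠ 0 := by
      simp only [ne_eq, Complex.ofReal_eq_zero]
      linarith
    set w : ℂ := (z + t) / ((1 - t : ℝ) : ℂ) with hw
    have hsw : ((1 - t : ℝ) : ℂ) * w = z + (t : ℂ) := by
      rw [hw, mul_div_cancel₀ _ hsne]
    have hzw : z = ((1 - t : ℝ) : ℂ) * w - (t : ℂ) := by rw [hsw]; ring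
    have hfact : z • (1 : Matrix (Fin m) (Fin m) ℂ) - ((((1 - t : ℝ)) : ℂ) • cmap M
        + (t : ℂ) • (-1 : Matrix (Fin m) (Fin m) ℂ))
        = ((1 - t : ℝ) : ℂ) • (w • (1 : Matrix (Fin m) (Fin m) ℂ) - cmap M) := by
      rw [smul_sub, smul_smul, hsw, add_smul, smul_neg]
      abel
    rw [hfact, Matrix.det_smul] at hz
    have hdet : (w • (1 : Matrix (Fin m) (Fin m) ℂ) - cmap M).det = 0 := by
      rcases mul_eq_zero.mp hz with h | h
      · exact absurd h (pow_ne_zero _ hsne)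
      · exact h
    have hwre : w.re < 0 := (isHurwitz_iff M).mp hM w hdet
    have hzre : z.re = (1 - t) * w.re - t := by
      rw [hzw, Complex.sub_re, Complex.re_ofReal_mul, Complex.ofReal_re]
    rw [hzre]
    nlinarith

lemma lyapL_affine (M : Matrix (Fin m) (Fin m) ℝ) (t : ℝ) :
    lyapL ((1 - t) • M + t • (-1 : Matrix (Fin m) (Fin m) ℝ))
      = (1 - t) • lyapL M + t • lyapL (-1) := by
  apply LinearMap.ext
  intro Q
  simp only [lyapL_apply, LinearMap.add_apply, LinearMap.smul_apply, lyapL_apply,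
    Matrix.transpose_add, Matrix.transpose_smul, Matrix.add_mul, Matrix.mul_add,
    smul_add, Matrix.smul_mul, Matrix.mul_smul]
  abel

lemma Nmat_affine (M : Matrix (Fin m) (Fin m) ℝ) (t : ℝ) :
    Nmat ((1 - t) • M + t • (-1 : Matrix (Fin m) (Fin m) ℝ))
      = (1 - t) • Nmat M + t • Nmat (-1) := by
  rw [Nmat, lyapL_affine, map_add, _root_.map_smul, _root_.map_smul]
  rfl

lemma continuousOn_solQ_path (M : Matrix (Fin m) (Fin m) ℝ)
    (hd : ∀ t ∈ Set.Icc (0:ℝ) 1,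
      (Nmat ((1 - t) • M + t • (-1 : Matrix (Fin m) (Fin m) ℝ))).det ≠ 0) :
    ContinuousOn (fun t => solQ ((1 - t) • M + t • (-1 : Matrix (Fin m) (Fin m) ℝ)))
      (Set.Icc (0:ℝ) 1) := by
  have hN : Continuous (fun t : ℝ =>
      Nmat ((1 - t) • M + t • (-1 : Matrix (Fin m) (Fin m) ℝ))) := by
    simp only [Nmat_affine]
    exact ((continuous_const.sub continuous_id).smul continuous_const).add
      (continuous_id.smul continuous_const)
  have hdet : ContinuousOn (fun t : ℝ =>
      (Nmat ((1 - t) • M + t • (-1 : Matrix (Fin m) (Fin m) ℝ))).det⁻¹)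
      (Set.Icc (0:ℝ) 1) :=
    (hN.matrix_det.continuousOn).inv₀ hd
  have hinv : ContinuousOn (fun t : ℝ =>
      (Nmat ((1 - t) • M + t • (-1 : Matrix (Fin m) (Fin m) ℝ)))⁻¹)
      (Set.Icc (0:ℝ) 1) := by
    have : ∀ t : ℝ, (Nmat ((1 - t) • M + t • (-1 : Matrix (Fin m) (Fin m) ℝ)))⁻¹
        = (Nmat ((1 - t) • M + t • (-1 : Matrix (Fin m) (Fin m) ℝ))).det⁻¹
          • (Nmat ((1 - t) • M + t • (-1 : Matrix (Fin m) (Fin m) ℝ))).adjugate := by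
      intro t
      rw [Matrix.inv_def, Ring.inverse_eq_inv']
    simp only [this]
    exact hdet.smul (hN.matrix_adjugate.continuousOn)
  have hmv : ContinuousOn (fun t : ℝ =>
      (Nmat ((1 - t) • M + t • (-1 : Matrix (Fin m) (Fin m) ℝ)))⁻¹
        *ᵥ matB.equivFun (-1 : Matrix (Fin m) (Fin m) ℝ)) (Set.Icc (0:ℝ) 1) := by
    have hc : Continuous (fun N : Matrix (Fin m × Fin m) (Fin m × Fin m) ℝ =>
        N *ᵥ matB.equivFun (-1 : Matrix (Fin m) (Fin m) ℝ)) :=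
      continuous_id.matrix_mulVec continuous_const
    exact hc.comp_continuousOn hinv
  have hsymm : Continuous (matB.equivFun.symm :
      (Fin m × Fin m → ℝ) → Matrix (Fin m) (Fin m) ℝ) :=
    LinearMap.continuous_of_finiteDimensional
      (matB.equivFun.symm : (Fin m × Fin m → ℝ) ≃ₗ[ℝ] _).toLinearMap
  exact hsymm.comp_continuousOn hmv

lemma isOpen_posQuad (hm : 1 ≤ m) :
    IsOpen {A : Matrix (Fin m) (Fin m) ℝ | ∀ x : Fin m → ℝ, x ≠ 0 → 0 < x ⬝ᵥ A *ᵥ x} := by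
  rw [← isClosed_compl_iff]
  have himg : {A : Matrix (Fin m) (Fin m) ℝ |
        ∀ x : Fin m → ℝ, x ≠ 0 → 0 < x ⬝ᵥ A *ᵥ x}ᶜ
      = Prod.snd '' {p : Metric.sphere (0 : Fin m → ℝ) 1 × Matrix (Fin m) (Fin m) ℝ |
          (p.1 : Fin m → ℝ) ⬝ᵥ p.2 *ᵥ (p.1 : Fin m → ℝ) ≤ 0} := by
    ext A
    simp only [Set.mem_compl_iff, Set.mem_setOf_eq, Set.mem_image, Prod.exists]
    constructor
    · intro h
      push_neg at h
      obtain ⟨x, hx0, hx⟩ := h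
      refine ⟨⟨‖x‖⁻¹ • x, ?_⟩, A, ?_, rfl⟩
      · rw [mem_sphere_zero_iff_norm]
        exact norm_smul_inv_norm hx0
      · show (‖x‖⁻¹ • x) ⬝ᵥ A *ᵥ (‖x‖⁻¹ • x) ≤ 0
        rw [Matrix.mulVec_smul, smul_dotProduct, dotProduct_smul,
          smul_eq_mul, smul_eq_mul]
        have h1 : (0:ℝ) ≤ ‖x‖⁻¹ := inv_nonneg.mpr (norm_nonneg x)
        exact mul_nonpos_of_nonneg_of_nonpos h1 (mul_nonpos_of_nonneg_of_nonpos h1 hx)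
    · rintro ⟨u, B, hu, rfl⟩
      replace hu : (u : Fin m → ℝ) ⬝ᵥ B *ᵥ (u : Fin m → ℝ) ≤ 0 := hu
      intro h
      have hu0 : (u : Fin m → ℝ) ≠ 0 := by
        intro h0
        have := u.2
        rw [mem_sphere_zero_iff_norm, h0] at this
        simp at this
      exact absurd (h u hu0) (not_lt.mpr hu)
  rw [himg]
  apply isClosedMap_snd_of_compactSpace
  have hcont : Continuous (fun p : Metric.sphere (0 : Fin m → ℝ) 1
      × Matrix (Fin m) (Fin m) ℝ => (p.1 : Fin m → ℝ) ⬝ᵥ p.2 *ᵥ (p.1 : Fin m → ℝ)) :=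
    (continuous_subtype_val.comp continuous_fst).dotProduct
      (continuous_snd.matrix_mulVec (continuous_subtype_val.comp continuous_fst))
  exact isClosed_le hcont continuous_const

lemma isClosed_psd :
    IsClosed {A : Matrix (Fin m) (Fin m) ℝ | ∀ x : Fin m → ℝ, 0 ≤ x ⬝ᵥ A *ᵥ x} := by
  have : {A : Matrix (Fin m) (Fin m) ℝ | ∀ x : Fin m → ℝ, 0 ≤ x ⬝ᵥ A *ᵥ x}
      = ⋂ x : Fin m → ℝ, {A | 0 ≤ x ⬝ᵥ A *ᵥ x} := by
    ext A; simp [Set.mem_iInter]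
  rw [this]
  exact isClosed_iInter fun x => isClosed_le continuous_const
    (continuous_const.dotProduct (continuous_id.matrix_mulVec continuous_const))

set_option maxHeartbeats 2000000 in
/-- Lyapunov theorem: for a Hurwitz matrix `M` there is a unique symmetric positive
definite `Q` with `Mᵀ Q + Q M = −I`. -/
theorem lyapunov_equation_unique_posdef_solution
    (m : ℕ) (hm : 1 ≤ m) (M : Matrix (Fin m) (Fin m) ℝ) (hM : IsHurwitz M) :
    ∃! Q : Matrix (Fin m) (Fin m) ℝ,
      Q.IsSymm ∧ Q.PosDef ∧ Mᵀ * Q + Q * M = -(1 : Matrix (Fin m) (Fin m) ℝ) := by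
  have hpath : ∀ t : ℝ, t ∈ Set.Icc (0:ℝ) 1 →
      IsHurwitz ((1 - t) • M + t • (-1 : Matrix (Fin m) (Fin m) ℝ)) :=
    fun t ht => isHurwitz_path hm hM ht
  have hdetpath : ∀ t ∈ Set.Icc (0:ℝ) 1,
      (Nmat ((1 - t) • M + t • (-1 : Matrix (Fin m) (Fin m) ℝ))).det ≠ 0 :=
    fun t ht => Nmat_det_ne_zero (hpath t ht)
  have hcont := continuousOn_solQ_path M hdetpath
  haveI : PreconnectedSpace (Set.Icc (0:ℝ) 1) :=
    Subtype.preconnectedSpace isPreconnected_Icc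
  set g : Set.Icc (0:ℝ) 1 → Matrix (Fin m) (Fin m) ℝ :=
    fun t => solQ ((1 - (t:ℝ)) • M + (t:ℝ) • (-1 : Matrix (Fin m) (Fin m) ℝ)) with hg
  have hgcont : Continuous g := hcont.restrict
  set U : Set (Set.Icc (0:ℝ) 1) :=
    g ⁻¹' {A : Matrix (Fin m) (Fin m) ℝ | ∀ x : Fin m → ℝ, x ≠ 0 → 0 < x ⬝ᵥ A *ᵥ x} with hU
  have hUopen : IsOpen U := (isOpen_posQuad hm).preimage hgcont
  have hUclosed : IsClosed U := by
    have hUeq : U = g ⁻¹' {A : Matrix (Fin m) (Fin m) ℝ | ∀ x : Fin m → ℝ,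
        0 ≤ x ⬝ᵥ A *ᵥ x} := by
      ext t
      constructor
      · intro htU x
        rcases eq_or_ne x 0 with rfl | hx
        · simp
        · exact le_of_lt (htU x hx)
      · intro hpsd x hx
        have hPD := posDef_of_psd_of_ker (solQ_isSymm (hpath (t:ℝ) t.2)) hpsd
          (fun y hy => solQ_mulVec_ne_zero (hpath (t:ℝ) t.2) hy)
        have h2 := hPD.dotProduct_mulVec_pos hx
        simp only [star_trivial] at h2
        exact h2
    rw [hUeq]
    exact isClosed_psd.preimage hgcont
  have h1mem : (⟨1, by norm_num⟩ : Set.Icc (0:ℝ) 1) ∈ U := by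
    have hpe : (1 - (1:ℝ)) • M + (1:ℝ) • (-1 : Matrix (Fin m) (Fin m) ℝ) = -1 := by
      norm_num
    have hH1 : IsHurwitz (-1 : Matrix (Fin m) (Fin m) ℝ) := by
      rw [← hpe]; exact hpath 1 ⟨by norm_num, le_refl 1⟩
    have hsol : lyapL (-1 : Matrix (Fin m) (Fin m) ℝ)
        (((1:ℝ)/2) • (1 : Matrix (Fin m) (Fin m) ℝ)) = -1 := by
      rw [lyapL_apply]
      simp only [Matrix.transpose_neg, Matrix.transpose_one, Matrix.neg_mul, Matrix.mul_neg,
        Matrix.mul_one, Matrix.one_mul]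
      rw [← neg_add, ← add_smul]
      norm_num
    have hg1 : g ⟨1, by norm_num⟩ = ((1:ℝ)/2) • (1 : Matrix (Fin m) (Fin m) ℝ) := by
      show solQ ((1 - (1:ℝ)) • M + (1:ℝ) • (-1 : Matrix (Fin m) (Fin m) ℝ)) = _
      rw [hpe]
      exact lyapL_unique hH1 (lyapL_solQ hH1) hsol
    have hhalf : (((1:ℝ)/2) • (1 : Matrix (Fin m) (Fin m) ℝ))
        ∈ {A : Matrix (Fin m) (Fin m) ℝ | ∀ x : Fin m → ℝ, x ≠ 0 → 0 < x ⬝ᵥ A *ᵥ x} := by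
      intro x hx
      rw [Matrix.smul_mulVec, Matrix.one_mulVec, dotProduct_smul, smul_eq_mul]
      have hxx : 0 < x ⬝ᵥ x := by
        rcases lt_or_eq_of_le (Finset.sum_nonneg fun i _ => mul_self_nonneg (x i)) with h | h
        · exact h
        · exact absurd (dotProduct_self_eq_zero.mp h.symm) hx
      linarith
    exact Set.mem_preimage.mpr (hg1 ▸ hhalf)
  have hUuniv : U = Set.univ := IsClopen.eq_univ ⟨hUclosed, hUopen⟩ ⟨_, h1mem⟩
  have h0mem : (⟨0, by norm_num⟩ : Set.Icc (0:ℝ) 1) ∈ U := by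
    rw [hUuniv]; trivial
  have hp0 : (1 - (0:ℝ)) • M + (0:ℝ) • (-1 : Matrix (Fin m) (Fin m) ℝ) = M := by
    norm_num
  have hpos : ∀ x : Fin m → ℝ, x ≠ 0 → 0 < x ⬝ᵥ solQ M *ᵥ x := by
    have := h0mem
    rw [hU] at this
    simp only [Set.mem_preimage, Set.mem_setOf_eq] at this
    rwa [show g ⟨0, by norm_num⟩ = solQ M by rw [hg]; simp only; rw [hp0]] at this
  refine ⟨solQ M, ⟨solQ_isSymm hM, ?_, ?_⟩, ?_⟩
  · refine posDef_of_psd_of_ker (solQ_isSymm hM) ?_ (fun y hy => solQ_mulVec_ne_zero hM hy)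
    intro x
    rcases eq_or_ne x 0 with rfl | hx
    · simp
    · exact le_of_lt (hpos x hx)
  · have := lyapL_solQ hM
    rwa [lyapL_apply] at this
  · rintro Q' ⟨-, -, he'⟩
    exact lyapL_unique hM (by rw [lyapL_apply]; exact he') (lyapL_solQ hM)
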